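/- Consider a customer attraction game with exactly two agents, both of weight 1, in which every node has value 1. Suppose σ_2 : 𝒮_1 → 𝒮_2 is a best-response map for agent 2, i.e., U_2(S_1, σ_2(S_1)) ≥ U_2(S_1, S_2) for all S_1 ∈ 𝒮_1 and S_2 ∈ 𝒮_2, and suppose S_1^* ∈ 𝒮_1 satisfies U_1(S_1^*, σ_2(S_1^*)) ≥ U_1(S_1, σ_2(S_1)) for all S_1 ∈ 𝒮_1; set S_2^* = σ_2(S_1^*). (This is exactly a subgame-perfect equilibrium outcome of the sequential game where agent 1 moves first.) Then for every strategy profile (S_1, S_2) ∈ 𝒮_1 × 𝒮_2, SW(S_1, S_2) ≤ (3/2) · SW(S_1^*, S_2^*). -/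

import Mathlib

open Finset

/-- A customer attraction game: nodes `N` with integer values `≥ 1`, agents `A`
with integer weights `≥ 1`, and a nonempty finite strategy space (a finite set of
subsets of `N`) for each agent. -/
structure CAG (N A : Type*) [Fintype N] [Fintype A] where
  v : N → ℕ
  v_pos : ∀ j, 1 ≤ v j
  w : A → ℕ
  w_pos : ∀ i, 1 ≤ w i
  strat : A → Finset (Finset N)
  strat_ne : ∀ i, (strat i).Nonempty

variable {N A : Type*} [Fintype N] [Fintype A] [DecidableEq N]

/-- The load `c(j,S)` of node `j`: total weight of agents attracting `j`. -/
def CAG.load (G : CAG N A) (S : A → Finset N) (j : N) : ℕ :=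
  ∑ i : A, if j ∈ S i then G.w i else 0

/-- The utility `U_i(S) = ∑_{j ∈ S_i} v_j · w_i / c(j,S)`. -/
noncomputable def CAG.util (G : CAG N A) (S : A → Finset N) (i : A) : ℝ :=
  ∑ j ∈ S i, (G.v j : ℝ) * (G.w i : ℝ) / (G.load S j : ℝ)

/-- A strategy profile: each agent plays a strategy from her strategy space. -/
def CAG.valid (G : CAG N A) (S : A → Finset N) : Prop :=
  ∀ i, S i ∈ G.strat i

/-- Pure Nash equilibrium. -/
def CAG.PNE [DecidableEq A] (G : CAG N A) (S : A → Finset N) : Prop :=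
  G.valid S ∧ ∀ i, ∀ S' ∈ G.strat i, G.util (Function.update S i S') i ≤ G.util S i

/-- Social welfare. -/
noncomputable def CAG.sw (G : CAG N A) (S : A → Finset N) : ℝ :=
  ∑ i : A, G.util S i

/-- The harmonic number `H_c = ∑_{k=1}^{c} 1/k`. -/
noncomputable def harm (c : ℕ) : ℝ := ∑ k ∈ Finset.range c, (1 : ℝ) / (k + 1)

/-- Rosenthal-type potential `Φ(S) = ∑_j v_j ∑_{k=1}^{c(j,S)} 1/k`. -/
noncomputable def CAG.pot (G : CAG N A) (S : A → Finset N) : ℝ :=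
  ∑ j : N, (G.v j : ℝ) * harm (G.load S j)


section Aux

variable {N : Type*} [Fintype N] [DecidableEq N]

lemma load_pair (G : CAG N (Fin 2)) (hw : ∀ i, G.w i = 1) (X Y : Finset N) (j : N) :
    G.load ![X, Y] j = (if j ∈ X then 1 else 0) + (if j ∈ Y then 1 else 0) := by
  rw [CAG.load, Fin.sum_univ_two]
  simp [hw]

lemma util0_eq (G : CAG N (Fin 2)) (hw : ∀ i, G.w i = 1) (hv : ∀ j, G.v j = 1)
    (X Y : Finset N) :
    G.util ![X, Y] 0 = (X.card : ℝ) - ((X ∩ Y).card : ℝ) / 2 := by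
  have key : ∀ j ∈ X, (G.v j : ℝ) * (G.w 0 : ℝ) / (G.load ![X, Y] j : ℝ)
      = 1 - (if j ∈ Y then (1 : ℝ) / 2 else 0) := by
    intro j hj
    rw [load_pair G hw, hv, hw]
    by_cases h : j ∈ Y <;> simp [hj, h] <;> norm_num
  rw [CAG.util]
  simp only [Matrix.cons_val_zero]
  rw [Finset.sum_congr rfl key, Finset.sum_sub_distrib, Finset.sum_const,
    Finset.sum_ite_mem, Finset.sum_const]
  push_cast
  ring

lemma util1_eq (G : CAG N (Fin 2)) (hw : ∀ i, G.w i = 1) (hv : ∀ j, G.v j = 1)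
    (X Y : Finset N) :
    G.util ![X, Y] 1 = (Y.card : ℝ) - ((X ∩ Y).card : ℝ) / 2 := by
  have key : ∀ j ∈ Y, (G.v j : ℝ) * (G.w 1 : ℝ) / (G.load ![X, Y] j : ℝ)
      = 1 - (if j ∈ X then (1 : ℝ) / 2 else 0) := by
    intro j hj
    rw [load_pair G hw, hv, hw]
    by_cases h : j ∈ X <;> simp [hj, h] <;> norm_num
  rw [CAG.util]
  simp only [Matrix.cons_val_one, Matrix.head_cons, Matrix.cons_val_zero]
  rw [Finset.sum_congr rfl key, Finset.sum_sub_distrib, Finset.sum_const,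
    Finset.sum_ite_mem, Finset.sum_const]
  rw [Finset.inter_comm]
  push_cast
  ring

lemma sw_pair (G : CAG N (Fin 2)) (hw : ∀ i, G.w i = 1) (hv : ∀ j, G.v j = 1)
    (X Y : Finset N) :
    G.sw ![X, Y] = ((X ∪ Y).card : ℝ) := by
  rw [CAG.sw, Fin.sum_univ_two, util0_eq G hw hv, util1_eq G hw hv]
  have h := Finset.card_union_add_card_inter X Y
  have h' : ((X ∪ Y).card : ℝ) + ((X ∩ Y).card : ℝ) = (X.card : ℝ) + (Y.card : ℝ) := by
    exact_mod_cast congrArg (Nat.cast : ℕ → ℝ) h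
  linarith

end Aux

/-- sequential PoA `3/2` for two symmetric agents.  If `σ₂` is a
best-response map for the second mover and `S₁*` is a first-mover strategy that is
optimal against `σ₂` (i.e. `(S₁*, σ₂ S₁*)` is a subgame-perfect-equilibrium outcome),
then every strategy profile has social welfare at most `3/2` times that of the
outcome `(S₁*, σ₂ S₁*)`. -/
theorem sequential_PoA_two_agents
    (G : CAG N (Fin 2)) (hw : ∀ i, G.w i = 1) (hv : ∀ j, G.v j = 1)
    (σ2 : Finset N → Finset N)
    (hσmem : ∀ S1 ∈ G.strat 0, σ2 S1 ∈ G.strat 1)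
    (hbr : ∀ S1 ∈ G.strat 0, ∀ S2 ∈ G.strat 1,
      G.util ![S1, S2] 1 ≤ G.util ![S1, σ2 S1] 1)
    (S1s : Finset N) (hS1s : S1s ∈ G.strat 0)
    (hopt : ∀ S1 ∈ G.strat 0, G.util ![S1, σ2 S1] 0 ≤ G.util ![S1s, σ2 S1s] 0) :
    ∀ S1 ∈ G.strat 0, ∀ S2 ∈ G.strat 1,
      G.sw ![S1, S2] ≤ (3 / 2 : ℝ) * G.sw ![S1s, σ2 S1s] := by
  intro S1 hS1 S2 hS2
  set T := σ2 S1 with hT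
  set Q := σ2 S1s with hQ
  have hTmem : T ∈ G.strat 1 := hσmem S1 hS1
  have h1 : G.util ![S1, T] 0 ≤ G.util ![S1s, Q] 0 := hopt S1 hS1
  have h2 : G.util ![S1, S2] 1 ≤ G.util ![S1, T] 1 := hbr S1 hS1 S2 hS2
  have h3 : G.util ![S1s, T] 1 ≤ G.util ![S1s, Q] 1 := hbr S1s hS1s T hTmem
  rw [util0_eq G hw hv, util0_eq G hw hv] at h1
  rw [util1_eq G hw hv, util1_eq G hw hv] at h2
  rw [util1_eq G hw hv, util1_eq G hw hv] at h3
  rw [sw_pair G hw hv, sw_pair G hw hv]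
  have e1 : ((S1 ∪ S2).card : ℝ) + ((S1 ∩ S2).card : ℝ)
      = (S1.card : ℝ) + (S2.card : ℝ) := by
    exact_mod_cast congrArg (Nat.cast : ℕ → ℝ) (Finset.card_union_add_card_inter S1 S2)
  have e2 : ((S1s ∪ Q).card : ℝ) + ((S1s ∩ Q).card : ℝ)
      = (S1s.card : ℝ) + (Q.card : ℝ) := by
    exact_mod_cast congrArg (Nat.cast : ℕ → ℝ) (Finset.card_union_add_card_inter S1s Q)
  have i1 : ((S1s ∩ T).card : ℝ) ≤ (S1s.card : ℝ) := by
    exact_mod_cast Finset.card_le_card (Finset.inter_subset_left)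
  have i2 : ((S1s ∩ Q).card : ℝ) ≤ (Q.card : ℝ) := by
    exact_mod_cast Finset.card_le_card (Finset.inter_subset_right)
  have i3 : (0 : ℝ) ≤ ((S1 ∩ S2).card : ℝ) := Nat.cast_nonneg _
  linarith
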